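/- Let φ: (M³,g) → (N²,h) be a submersive semi-conformal map with dilation λ. Then the mean curvature of the horizontal distribution H, given by (1/2) g(U, ∇_{e₁}e₁ + ∇_{e₂}e₂) for any orthonormal horizontal frame {e₁,e₂}, equals U(ln λ), where U is the unit vertical vector field. -/

import Mathlib

open scoped BigOperators

noncomputable section

/-- Partial derivative of `f` in the `i`-th coordinate direction. -/
def pd {n : ℕ} (f : (Fin n → ℝ) → ℝ) (i : Fin n) (x : Fin n → ℝ) : ℝ :=
  fderiv ℝ f x (Pi.single i 1)

/-- Pointwise inverse of a metric (the components `g^{ij}`). -/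
def ginv {n : ℕ} (g : (Fin n → ℝ) → Matrix (Fin n) (Fin n) ℝ) (x : Fin n → ℝ) :
    Matrix (Fin n) (Fin n) ℝ := (g x)⁻¹

/-- A smooth Riemannian metric in coordinates. -/
def IsMetric {n : ℕ} (g : (Fin n → ℝ) → Matrix (Fin n) (Fin n) ℝ) : Prop :=
  (∀ i j, ContDiff ℝ (⊤ : ℕ∞) fun x => g x i j) ∧ ∀ x, (g x).IsSymm ∧ (g x).PosDef

/-- A smooth vector field (or componentwise-smooth family). -/
def SmoothVF {n : ℕ} (X : (Fin n → ℝ) → Fin n → ℝ) : Prop :=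
  ∀ k, ContDiff ℝ (⊤ : ℕ∞) fun x => X x k

/-- Christoffel symbols `Γ^k_{ij}` of the metric `g`. -/
def christoffel {n : ℕ} (g : (Fin n → ℝ) → Matrix (Fin n) (Fin n) ℝ)
    (k i j : Fin n) (x : Fin n → ℝ) : ℝ :=
  (1 / 2) * ∑ l, ginv g x k l *
    (pd (fun y => g y l j) i x + pd (fun y => g y l i) j x - pd (fun y => g y i j) l x)

/-- Covariant derivative `(∇_X Y)^k` of the Levi-Civita connection of `g`. -/
def covD {n : ℕ} (g : (Fin n → ℝ) → Matrix (Fin n) (Fin n) ℝ)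
    (X Y : (Fin n → ℝ) → Fin n → ℝ) (x : Fin n → ℝ) (k : Fin n) : ℝ :=
  (∑ i, X x i * pd (fun y => Y y k) i x) + ∑ i, ∑ j, christoffel g k i j x * X x i * Y x j

/-- The Lie bracket of vector fields, `[X,Y]^k = X^i ∂_i Y^k - Y^i ∂_i X^k`. -/
def bracket {n : ℕ} (X Y : (Fin n → ℝ) → Fin n → ℝ) (x : Fin n → ℝ) (k : Fin n) : ℝ :=
  ∑ i, (X x i * pd (fun y => Y y k) i x - Y x i * pd (fun y => X y k) i x)

/-- `φ : (M³,g) → (N²,h)` is semi-conformal with dilation `λ`, in the local-coordinate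
characterization `g^{ij} φ^α_i φ^β_j = λ² h^{αβ}`. -/
def SemiConformal (g : (Fin 3 → ℝ) → Matrix (Fin 3) (Fin 3) ℝ)
    (h : (Fin 2 → ℝ) → Matrix (Fin 2) (Fin 2) ℝ)
    (φ : (Fin 3 → ℝ) → Fin 2 → ℝ) (lam : (Fin 3 → ℝ) → ℝ) : Prop :=
  ∀ x α β, (∑ i, ∑ j, ginv g x i j * pd (fun y => φ y α) i x * pd (fun y => φ y β) j x)
    = lam x ^ 2 * ginv h (φ x) α β

/-- A vector field is vertical when it lies in `ker dφ`. -/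
def Vertical (φ : (Fin 3 → ℝ) → Fin 2 → ℝ) (U : (Fin 3 → ℝ) → Fin 3 → ℝ) : Prop :=
  ∀ x α, (∑ i, pd (fun y => φ y α) i x * U x i) = 0

/-- A vector field of unit length for `g`. -/
def UnitField (g : (Fin 3 → ℝ) → Matrix (Fin 3) (Fin 3) ℝ)
    (U : (Fin 3 → ℝ) → Fin 3 → ℝ) : Prop :=
  ∀ x, (∑ i, ∑ j, g x i j * U x i * U x j) = 1

/-- The dual 1-form `X♭ = g(X,·)`. -/
def flat (g : (Fin 3 → ℝ) → Matrix (Fin 3) (Fin 3) ℝ)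
    (X : (Fin 3 → ℝ) → Fin 3 → ℝ) (j : Fin 3) (x : Fin 3 → ℝ) : ℝ :=
  ∑ k, g x j k * X x k

/-- Horizontal projection (relative to the unit vertical field `U`):
`H X = X - g(X,U) U`. -/
def Hproj (g : (Fin 3 → ℝ) → Matrix (Fin 3) (Fin 3) ℝ)
    (U X : (Fin 3 → ℝ) → Fin 3 → ℝ) (x : Fin 3 → ℝ) (k : Fin 3) : ℝ :=
  X x k - (∑ i, ∑ j, g x i j * X x i * U x j) * U x k

/-- The mean curvature vector `μ = ∇_U U` of the fibres (`U` the unit vertical field). -/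
def meanCurv (g : (Fin 3 → ℝ) → Matrix (Fin 3) (Fin 3) ℝ)
    (U : (Fin 3 → ℝ) → Fin 3 → ℝ) (x : Fin 3 → ℝ) (k : Fin 3) : ℝ :=
  covD g U U x k

/-- Lie derivative of the metric: `(L_E g)_{ij} = E^k ∂_k g_{ij} + g_{kj} ∂_i E^k + g_{ik} ∂_j E^k`. -/
def lieD {n : ℕ} (g : (Fin n → ℝ) → Matrix (Fin n) (Fin n) ℝ)
    (E : (Fin n → ℝ) → Fin n → ℝ) (i j : Fin n) (x : Fin n → ℝ) : ℝ :=
  (∑ k, E x k * pd (fun y => g y i j) k x)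
    + (∑ k, g x k j * pd (fun y => E y k) i x)
    + ∑ k, g x i k * pd (fun y => E y k) j x

open scoped Matrix

lemma pd_sum {n : ℕ} {ι : Type*} (s : Finset ι) (f : ι → (Fin n → ℝ) → ℝ) {x : Fin n → ℝ}
    (i : Fin n) (hf : ∀ l ∈ s, DifferentiableAt ℝ (f l) x) :
    pd (fun y => ∑ l ∈ s, f l y) i x = ∑ l ∈ s, pd (f l) i x := by
  unfold pd
  rw [fderiv_fun_sum hf]
  simp

lemma pd_mul {n : ℕ} {f g : (Fin n → ℝ) → ℝ} {x : Fin n → ℝ} (i : Fin n)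
    (hf : DifferentiableAt ℝ f x) (hg : DifferentiableAt ℝ g x) :
    pd (fun y => f y * g y) i x = pd f i x * g x + f x * pd g i x := by
  unfold pd
  rw [fderiv_fun_mul hf hg]
  simp [mul_comm]
  ring

lemma pd_const {n : ℕ} (c : ℝ) (i : Fin n) (x : Fin n → ℝ) :
    pd (fun _ => c) i x = 0 := by
  unfold pd
  rw [fderiv_fun_const]
  simp

lemma contDiff_pd {n : ℕ} {f : (Fin n → ℝ) → ℝ} (hf : ContDiff ℝ (⊤ : ℕ∞) f) (i : Fin n) :
    ContDiff ℝ (⊤ : ℕ∞) (fun y => pd f i y) := by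
  unfold pd
  exact (hf.fderiv_right (m := (⊤ : ℕ∞)) (by exact_mod_cast le_top)).clm_apply contDiff_const

lemma pd_pd_symm {n : ℕ} {f : (Fin n → ℝ) → ℝ} (hf : ContDiff ℝ (⊤ : ℕ∞) f)
    (i k : Fin n) (x : Fin n → ℝ) :
    pd (fun y => pd f k y) i x = pd (fun y => pd f i y) k x := by
  have hd : DifferentiableAt ℝ (fderiv ℝ f) x :=
    ((hf.fderiv_right (m := (⊤ : ℕ∞)) (by exact_mod_cast le_top)).differentiable
      (by simp)).differentiableAt
  have hsym : IsSymmSndFDerivAt ℝ f x :=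
    hf.contDiffAt.isSymmSndFDerivAt (by
      have : ((2:ℕ∞) : WithTop ℕ∞) ≤ ((⊤ : ℕ∞) : WithTop ℕ∞) := WithTop.coe_le_coe.2 le_top
      simpa using this)
  have key : ∀ (j : Fin n) (v : Fin n → ℝ),
      fderiv ℝ (fun y => fderiv ℝ f y v) x (Pi.single j 1)
        = fderiv ℝ (fderiv ℝ f) x (Pi.single j 1) v := by
    intro j v
    rw [fderiv_clm_apply hd (differentiableAt_const v)]
    simp
  show fderiv ℝ (fun y => fderiv ℝ f y (Pi.single k 1)) x (Pi.single i 1)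
      = fderiv ℝ (fun y => fderiv ℝ f y (Pi.single i 1)) x (Pi.single k 1)
  rw [key i (Pi.single k 1), key k (Pi.single i 1), hsym.eq]

lemma pd_dot {n m : ℕ} (a b : (Fin n → ℝ) → Fin m → ℝ) {x : Fin n → ℝ} (k : Fin n)
    (ha : ∀ i, DifferentiableAt ℝ (fun y => a y i) x)
    (hb : ∀ i, DifferentiableAt ℝ (fun y => b y i) x) :
    pd (fun y => ∑ i, a y i * b y i) k x
      = ∑ i, (pd (fun y => a y i) k x * b x i + a x i * pd (fun y => b y i) k x) := by
  rw [pd_sum _ _ k (fun l _ => (ha l).fun_mul (hb l))]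
  exact Finset.sum_congr rfl fun l _ => pd_mul k (ha l) (hb l)

lemma pd_contract3 {n m : ℕ} (a : (Fin n → ℝ) → Fin m → Fin m → ℝ)
    (b c : (Fin n → ℝ) → Fin m → ℝ) {x : Fin n → ℝ} (k : Fin n)
    (ha : ∀ i j, DifferentiableAt ℝ (fun y => a y i j) x)
    (hb : ∀ i, DifferentiableAt ℝ (fun y => b y i) x)
    (hc : ∀ i, DifferentiableAt ℝ (fun y => c y i) x) :
    pd (fun y => ∑ i, ∑ j, a y i j * b y i * c y j) k x
      = ∑ i, ∑ j, (pd (fun y => a y i j) k x * b x i * c x j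
          + a x i j * pd (fun y => b y i) k x * c x j
          + a x i j * b x i * pd (fun y => c y j) k x) := by
  rw [pd_sum _ _ k (fun i _ => DifferentiableAt.fun_sum fun j _ => ((ha i j).fun_mul (hb i)).fun_mul (hc j))]
  refine Finset.sum_congr rfl fun i _ => ?_
  rw [pd_sum _ _ k (fun j _ => ((ha i j).fun_mul (hb i)).fun_mul (hc j))]
  refine Finset.sum_congr rfl fun j _ => ?_
  rw [pd_mul k ((ha i j).fun_mul (hb i)) (hc j), pd_mul k (ha i j) (hb i)]
  ring

lemma collapse {m : ℕ} {M N : Matrix (Fin m) (Fin m) ℝ} (h : M * N = 1)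
    (c : Fin m → ℝ) (p : Fin m) :
    ∑ i, M p i * (∑ l, N i l * c l) = c p := by
  have : ∑ i, M p i * (∑ l, N i l * c l) = ∑ l, (M * N) p l * c l := by
    simp only [Finset.mul_sum, Matrix.mul_apply, Finset.sum_mul]
    rw [Finset.sum_comm]
    exact Finset.sum_congr rfl fun l _ => Finset.sum_congr rfl fun i _ => by ring
  rw [this, h]
  simp [Matrix.one_apply]

lemma contDiff_det3 (g : (Fin 3 → ℝ) → Matrix (Fin 3) (Fin 3) ℝ)
    (hg : ∀ i j, ContDiff ℝ (⊤ : ℕ∞) fun x => g x i j) :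
    ContDiff ℝ (⊤ : ℕ∞) fun x => (g x).det := by
  simp only [Matrix.det_fin_three]
  fun_prop

lemma contDiff_inv3 (g : (Fin 3 → ℝ) → Matrix (Fin 3) (Fin 3) ℝ)
    (hg : ∀ i j, ContDiff ℝ (⊤ : ℕ∞) fun x => g x i j)
    (hdet : ∀ x, (g x).det ≠ 0) (i j : Fin 3) :
    ContDiff ℝ (⊤ : ℕ∞) fun x => (g x)⁻¹ i j := by
  have hrw : ∀ x, (g x)⁻¹ i j = ((g x).det)⁻¹ * (g x).adjugate i j := by
    intro x
    rw [Matrix.inv_def, Matrix.smul_apply, Ring.inverse_eq_inv']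
    rfl
  simp only [hrw]
  refine ((contDiff_det3 g hg).inv hdet).mul ?_
  fin_cases i <;> fin_cases j <;> simp [Matrix.adjugate_fin_three] <;> fun_prop

lemma contDiff_det2 (g : (Fin 2 → ℝ) → Matrix (Fin 2) (Fin 2) ℝ)
    (hg : ∀ i j, ContDiff ℝ (⊤ : ℕ∞) fun x => g x i j) :
    ContDiff ℝ (⊤ : ℕ∞) fun x => (g x).det := by
  simp only [Matrix.det_fin_two]
  fun_prop

lemma contDiff_inv2 (g : (Fin 2 → ℝ) → Matrix (Fin 2) (Fin 2) ℝ)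
    (hg : ∀ i j, ContDiff ℝ (⊤ : ℕ∞) fun x => g x i j)
    (hdet : ∀ x, (g x).det ≠ 0) (i j : Fin 2) :
    ContDiff ℝ (⊤ : ℕ∞) fun x => (g x)⁻¹ i j := by
  have hrw : ∀ x, (g x)⁻¹ i j = ((g x).det)⁻¹ * (g x).adjugate i j := by
    intro x
    rw [Matrix.inv_def, Matrix.smul_apply, Ring.inverse_eq_inv']
    rfl
  simp only [hrw]
  refine ((contDiff_det2 g hg).inv hdet).mul ?_
  fin_cases i <;> fin_cases j <;> simp [Matrix.adjugate_fin_two] <;> fun_prop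

lemma chain_vanish (φ : (Fin 3 → ℝ) → Fin 2 → ℝ) (F : (Fin 2 → ℝ) → ℝ) (u : Fin 3 → ℝ)
    (x : Fin 3 → ℝ) (hφ : ∀ α, ContDiff ℝ (⊤ : ℕ∞) fun y => φ y α)
    (hF : DifferentiableAt ℝ F (φ x))
    (hvert : ∀ α, (∑ k, pd (fun y => φ y α) k x * u k) = 0) :
    ∑ k, u k * pd (fun y => F (φ y)) k x = 0 := by
  have hφd : DifferentiableAt ℝ φ x :=
    differentiableAt_pi.2 fun α => ((hφ α).differentiable (by simp)).differentiableAt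
  have hcomp : ∀ k : Fin 3, pd (fun y => F (φ y)) k x
      = fderiv ℝ F (φ x) (fderiv ℝ φ x (Pi.single k 1)) := by
    intro k
    unfold pd
    rw [show (fun y => F (φ y)) = F ∘ φ from rfl, fderiv_comp x hF hφd]
    rfl
  have hpi : ∀ (k : Fin 3) (α : Fin 2), fderiv ℝ φ x (Pi.single k 1) α
      = pd (fun y => φ y α) k x := by
    intro k α
    rw [fderiv_pi (fun α => ((hφ α).differentiable (by simp)).differentiableAt)]
    rfl
  have hw : (∑ k, u k • fderiv ℝ φ x (Pi.single k 1)) = 0 := by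
    funext α
    simp only [Finset.sum_apply, Pi.smul_apply, smul_eq_mul, hpi, Pi.zero_apply]
    calc ∑ k, u k * pd (fun y => φ y α) k x
        = ∑ k, pd (fun y => φ y α) k x * u k := by
          exact Finset.sum_congr rfl fun k _ => mul_comm _ _
      _ = 0 := hvert α
  calc ∑ k, u k * pd (fun y => F (φ y)) k x
      = ∑ k, fderiv ℝ F (φ x) (u k • fderiv ℝ φ x (Pi.single k 1)) := by
        refine Finset.sum_congr rfl fun k _ => ?_
        rw [hcomp k, (fderiv ℝ F (φ x)).map_smul]
        simp
    _ = fderiv ℝ F (φ x) (∑ k, u k • fderiv ℝ φ x (Pi.single k 1)) := by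
        rw [map_sum]
    _ = 0 := by rw [hw]; simp

lemma pd_log {n : ℕ} (lam : (Fin n → ℝ) → ℝ) (hlam : ContDiff ℝ (⊤ : ℕ∞) lam)
    (hpos : ∀ x, 0 < lam x) (k : Fin n) (x : Fin n → ℝ) :
    pd (fun y => Real.log (lam y)) k x = (lam x)⁻¹ * pd lam k x := by
  have hd : DifferentiableAt ℝ lam x :=
    (hlam.differentiable (by simp)).differentiableAt
  have h := (hd.hasFDerivAt.log (hpos x).ne')
  unfold pd
  rw [h.fderiv]
  simp
lemma step1 (G : Matrix (Fin 3) (Fin 3) ℝ) (dg : Fin 3 → Fin 3 → Fin 3 → ℝ)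
    (Γ : Fin 3 → Fin 3 → Fin 3 → ℝ) (u X : Fin 3 → ℝ) (du dX : Fin 3 → Fin 3 → ℝ)
    (hGs : ∀ i j, G i j = G j i) (hdgs : ∀ k i j, dg k i j = dg k j i)
    (hGlow : ∀ j i m, (∑ k, G j k * Γ k i m) = (1/2)*(dg i j m + dg m j i - dg j i m))
    (hdh : ∀ k, (∑ i, ∑ j, (dg k i j * X i * u j + G i j * dX k i * u j
      + G i j * X i * du k j)) = 0) :
    (∑ j, ∑ k, G j k * u j * ((∑ i, X i * dX i k) + ∑ i, ∑ m, Γ k i m * X i * X m))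
      = -(1/2) * ∑ i, ∑ j, ((∑ k, u k * dg k i j) + (∑ k, G k j * du i k)
          + (∑ k, G i k * du j k)) * X i * X j := by
  have HG : (∑ j, ∑ i, ∑ m, (u j * X i * X m) * (∑ k, G j k * Γ k i m))
      = ∑ j, ∑ i, ∑ m, (u j * X i * X m) * ((1/2)*(dg i j m + dg m j i - dg j i m)) :=
    Finset.sum_congr rfl fun j _ => Finset.sum_congr rfl fun i _ =>
      Finset.sum_congr rfl fun m _ => by rw [hGlow]
  have e0 := hdh 0
  have e1 := hdh 1
  have e2 := hdh 2
  simp only [Fin.sum_univ_three] at HG e0 e1 e2 ⊢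
  simp only [hGs 1 0, hGs 2 0, hGs 2 1, hdgs 0 1 0, hdgs 0 2 0, hdgs 0 2 1,
    hdgs 1 1 0, hdgs 1 2 0, hdgs 1 2 1, hdgs 2 1 0, hdgs 2 2 0, hdgs 2 2 1] at HG e0 e1 e2 ⊢
  linear_combination HG + X 0 * e0 + X 1 * e1 + X 2 * e2

lemma stepUU (G : Matrix (Fin 3) (Fin 3) ℝ) (dg : Fin 3 → Fin 3 → Fin 3 → ℝ)
    (u : Fin 3 → ℝ) (du : Fin 3 → Fin 3 → ℝ)
    (hGs : ∀ i j, G i j = G j i) (hdgs : ∀ k i j, dg k i j = dg k j i)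
    (hdu : ∀ k, (∑ i, ∑ j, (dg k i j * u i * u j + G i j * du k i * u j
      + G i j * u i * du k j)) = 0) :
    (∑ i, ∑ j, ((∑ k, u k * dg k i j) + (∑ k, G k j * du i k)
      + (∑ k, G i k * du j k)) * u i * u j) = 0 := by
  have e0 := hdu 0
  have e1 := hdu 1
  have e2 := hdu 2
  simp only [Fin.sum_univ_three] at e0 e1 e2 ⊢
  simp only [hGs 1 0, hGs 2 0, hGs 2 1, hdgs 0 1 0, hdgs 0 2 0, hdgs 0 2 1,
    hdgs 1 1 0, hdgs 1 2 0, hdgs 1 2 1, hdgs 2 1 0, hdgs 2 2 0, hdgs 2 2 1] at e0 e1 e2 ⊢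
  linear_combination u 0 * e0 + u 1 * e1 + u 2 * e2

open scoped Matrix in
lemma frame (G Gi : Matrix (Fin 3) (Fin 3) ℝ) (u e1 e2 : Fin 3 → ℝ)
    (hGs : ∀ i j, G i j = G j i) (hGGi : G * Gi = 1)
    (huu : (∑ i, ∑ j, G i j * u i * u j) = 1)
    (h11 : (∑ i, ∑ j, G i j * e1 i * e1 j) = 1)
    (h22 : (∑ i, ∑ j, G i j * e2 i * e2 j) = 1)
    (h12 : (∑ i, ∑ j, G i j * e1 i * e2 j) = 0)
    (h1u : (∑ i, ∑ j, G i j * e1 i * u j) = 0)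
    (h2u : (∑ i, ∑ j, G i j * e2 i * u j) = 0) :
    ∀ i j, u i * u j + e1 i * e1 j + e2 i * e2 j = Gi i j := by
  set A : Matrix (Fin 3) (Fin 3) ℝ := Matrix.of (fun i a => ![u i, e1 i, e2 i] a) with hAdef
  simp only [Fin.sum_univ_three] at huu h11 h22 h12 h1u h2u
  simp only [hGs 1 0, hGs 2 0, hGs 2 1] at huu h11 h22 h12 h1u h2u
  have hA : Aᵀ * G * A = 1 := by
    ext a b
    fin_cases a <;> fin_cases b <;>
      · simp only [Matrix.mul_apply, Fin.sum_univ_three, Matrix.transpose_apply, hAdef,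
          Matrix.of_apply, Matrix.cons_val_zero, Matrix.cons_val_one, Matrix.head_cons,
          Matrix.cons_val_two, Matrix.tail_cons, Matrix.one_apply]
        norm_num [Fin.ext_iff]
        simp only [hGs 1 0, hGs 2 0, hGs 2 1]
        first
          | linear_combination huu | linear_combination h11 | linear_combination h22
          | linear_combination h12 | linear_combination h1u | linear_combination h2u
  have hA' : A * (Aᵀ * G) = 1 := mul_eq_one_comm.mp hA
  have hAAtG : (A * Aᵀ) * G = 1 := by rw [mul_assoc]; exact hA'
  have hAAt : A * Aᵀ = Gi := by
    have h2 : (A * Aᵀ) * (G * Gi) = Gi := by rw [← mul_assoc, hAAtG, one_mul]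
    rw [hGGi, mul_one] at h2
    exact h2
  intro i j
  have h := congrFun (congrFun hAAt i) j
  simpa [Matrix.mul_apply, Fin.sum_univ_three, Matrix.transpose_apply, hAdef] using h

lemma dGi_solve (G Gi : Matrix (Fin 3) (Fin 3) ℝ) (dg dGi : Fin 3 → Fin 3 → Fin 3 → ℝ)
    (hGiG : Gi * G = 1)
    (h9 : ∀ k i j, (∑ m, (dg k i m * Gi m j + G i m * dGi k m j)) = 0) :
    ∀ k p j, dGi k p j = -∑ i, ∑ m, Gi p i * dg k i m * Gi m j := by
  intro k p j
  have hc := collapse hGiG (fun m => dGi k m j) p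
  have hstep : ∀ i, (∑ m, G i m * dGi k m j) = -(∑ m, dg k i m * Gi m j) := by
    intro i
    have h := h9 k i j
    rw [Finset.sum_add_distrib] at h
    linarith
  calc dGi k p j = ∑ i, Gi p i * (∑ m, G i m * dGi k m j) := hc.symm
    _ = ∑ i, Gi p i * (-(∑ m, dg k i m * Gi m j)) :=
        Finset.sum_congr rfl fun i _ => by rw [hstep i]
    _ = -∑ i, ∑ m, Gi p i * dg k i m * Gi m j := by
        simp only [Fin.sum_univ_three]
        ring

open scoped Matrix in
lemma claimP (G Gi : Matrix (Fin 3) (Fin 3) ℝ) (Hm Hi : Matrix (Fin 2) (Fin 2) ℝ)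
    (B : Matrix (Fin 2) (Fin 3) ℝ) (u : Fin 3 → ℝ) (l2 : ℝ)
    (A : Matrix (Fin 3) (Fin 3) ℝ)
    (hA : Aᵀ * G * A = 1) (hAu : ∀ i, A i 0 = u i)
    (hl2 : l2 ≠ 0) (hGT : Gᵀ = G) (hGGi : G * Gi = 1) (hHmHi : Hm * Hi = 1)
    (hsc : ∀ α β, (∑ i, ∑ j, Gi i j * B α i * B β j) = l2 * Hi α β)
    (hBu : ∀ α, (∑ i, B α i * u i) = 0) :
    ∀ i j, (∑ α, ∑ β, Hm α β * B α i * B β j)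
      = l2 * (G i j - (∑ k, G i k * u k) * (∑ k, G j k * u k)) := by
  have hGs : ∀ a b : Fin 3, G a b = G b a := fun a b => by
    have h := congrFun (congrFun hGT b) a
    rw [Matrix.transpose_apply] at h
    exact h
  have hA' : A * (Aᵀ * G) = 1 := mul_eq_one_comm.mp hA
  have hAAtG : (A * Aᵀ) * G = 1 := by rw [mul_assoc]; exact hA'
  have hAAt : A * Aᵀ = Gi := by
    have h2 : (A * Aᵀ) * (G * Gi) = Gi := by rw [← mul_assoc, hAAtG, one_mul]
    rw [hGGi, mul_one] at h2
    exact h2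
  set C : Matrix (Fin 2) (Fin 3) ℝ := B * A with hCdef
  have hC0 : ∀ α, C α 0 = 0 := by
    intro α
    have h : C α 0 = ∑ i, B α i * u i := by
      simp only [hCdef, Matrix.mul_apply]
      exact Finset.sum_congr rfl fun i _ => by rw [hAu]
    rw [h, hBu]
  have hBGiBt : B * Gi * Bᵀ = l2 • Hi := by
    ext α β
    have h := hsc α β
    simp only [Fin.sum_univ_three] at h
    simp only [Matrix.mul_apply, Matrix.transpose_apply, Matrix.smul_apply,
      Fin.sum_univ_three, smul_eq_mul]
    linear_combination h
  have hCCt : C * Cᵀ = l2 • Hi := by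
    have h : C * Cᵀ = B * (A * Aᵀ) * Bᵀ := by
      rw [hCdef, Matrix.transpose_mul]
      simp only [Matrix.mul_assoc]
    rw [h, hAAt, hBGiBt]
  set D : Matrix (Fin 2) (Fin 2) ℝ := Matrix.of (fun α a => ![C α 1, C α 2] a) with hDdef
  have hDDt : D * Dᵀ = l2 • Hi := by
    ext α β
    have h := congrFun (congrFun hCCt α) β
    simp only [Matrix.mul_apply, Matrix.transpose_apply, Fin.sum_univ_three, hC0,
      Matrix.smul_apply, smul_eq_mul, zero_mul, mul_zero, zero_add] at h
    simp only [hDdef, Matrix.mul_apply, Matrix.transpose_apply, Matrix.of_apply,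
      Fin.sum_univ_two, Matrix.cons_val_zero, Matrix.cons_val_one, Matrix.head_cons,
      Matrix.smul_apply, smul_eq_mul]
    linear_combination h
  have hHiHm : Hi * Hm = 1 := mul_eq_one_comm.mp hHmHi
  have hD1 : D * ((1/l2) • (Dᵀ * Hm)) = 1 := by
    rw [Matrix.mul_smul, ← mul_assoc, hDDt, Matrix.smul_mul, smul_smul]
    rw [one_div, inv_mul_cancel₀ hl2, one_smul, hHiHm]
  have hD2 : ((1/l2) • (Dᵀ * Hm)) * D = 1 := mul_eq_one_comm.mp hD1
  have hDtHD : Dᵀ * Hm * D = l2 • (1 : Matrix (Fin 2) (Fin 2) ℝ) := by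
    have h2 : l2 • (((1/l2) • (Dᵀ * Hm)) * D) = l2 • (1 : Matrix (Fin 2) (Fin 2) ℝ) := by
      rw [hD2]
    rw [Matrix.smul_mul, smul_smul, mul_one_div, div_self hl2, one_smul] at h2
    exact h2
  set E00 : Matrix (Fin 3) (Fin 3) ℝ :=
    Matrix.of (fun a b => (if a = 0 then (1:ℝ) else 0) * (if b = 0 then (1:ℝ) else 0))
    with hE00
  have hCtHC : Cᵀ * Hm * C = l2 • ((1 : Matrix (Fin 3) (Fin 3) ℝ) - E00) := by
    ext a b
    have hd00 := congrFun (congrFun hDtHD 0) 0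
    have hd01 := congrFun (congrFun hDtHD 0) 1
    have hd10 := congrFun (congrFun hDtHD 1) 0
    have hd11 := congrFun (congrFun hDtHD 1) 1
    simp only [hDdef, Matrix.mul_apply, Matrix.transpose_apply, Matrix.of_apply,
      Fin.sum_univ_two, Matrix.cons_val_zero, Matrix.cons_val_one, Matrix.head_cons,
      Matrix.smul_apply, smul_eq_mul, Matrix.one_apply] at hd00 hd01 hd10 hd11
    norm_num at hd00 hd01 hd10 hd11
    fin_cases a <;> fin_cases b <;>
      · simp only [Matrix.mul_apply, Matrix.transpose_apply, Fin.sum_univ_two,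
          Fin.sum_univ_three, Matrix.smul_apply, smul_eq_mul, Matrix.sub_apply,
          Matrix.one_apply, hE00, Matrix.of_apply,
          show ((⟨0, by omega⟩ : Fin 3)) = 0 from rfl,
          show ((⟨1, by omega⟩ : Fin 3)) = 1 from rfl,
          show ((⟨2, by omega⟩ : Fin 3)) = 2 from rfl, hC0]
        norm_num [Fin.ext_iff] <;>
          first
            | linear_combination hd00 | linear_combination hd01
            | linear_combination hd10 | linear_combination hd11
  have hBC : B = C * (Aᵀ * G) := by
    rw [hCdef, Matrix.mul_assoc, hA', Matrix.mul_one]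
  have hW : A * E00 * Aᵀ = Matrix.of (fun i j => u i * u j) := by
    ext i j
    simp only [Matrix.mul_apply, Matrix.transpose_apply, Matrix.of_apply, hE00,
      Fin.sum_univ_three]
    norm_num [Fin.ext_iff]
    rw [hAu, hAu]
  have hfinal : Bᵀ * Hm * B
      = l2 • (G - G * (Matrix.of (fun i j => u i * u j)) * G) := by
    have h1 : Bᵀ * Hm * B = (Aᵀ * G)ᵀ * (Cᵀ * Hm * C) * (Aᵀ * G) := by
      conv_lhs => rw [hBC]
      rw [Matrix.transpose_mul]
      simp only [Matrix.mul_assoc]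
    rw [h1, hCtHC]
    have h2 : (Aᵀ * G)ᵀ * (l2 • ((1 : Matrix (Fin 3) (Fin 3) ℝ) - E00)) * (Aᵀ * G)
        = l2 • ((Gᵀ * ((A * Aᵀ) * G)) - (Gᵀ * ((A * E00 * Aᵀ) * G))) := by
      rw [Matrix.transpose_mul, Matrix.transpose_transpose]
      rw [Matrix.mul_smul, Matrix.smul_mul]
      congr 1
      rw [Matrix.mul_sub, Matrix.sub_mul]
      congr 1
      · rw [Matrix.mul_one]
        simp only [Matrix.mul_assoc]
      · simp only [Matrix.mul_assoc]
    rw [h2, hAAt, hW, hGT]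
    congr 1
    rw [← Matrix.mul_assoc G Gi G, hGGi, Matrix.one_mul, ← Matrix.mul_assoc]
  intro i j
  have h := congrFun (congrFun hfinal i) j
  simp only [Matrix.mul_apply, Matrix.transpose_apply, Matrix.smul_apply, smul_eq_mul,
    Matrix.sub_apply, Matrix.of_apply, Fin.sum_univ_two, Fin.sum_univ_three] at h ⊢
  simp only [hGs 0 i, hGs 1 i, hGs 2 i, hGs 0 j, hGs 1 j, hGs 2 j] at h ⊢
  linear_combination h

lemma step5a (Gi : Matrix (Fin 3) (Fin 3) ℝ) (B : Fin 2 → Fin 3 → ℝ) (u : Fin 3 → ℝ)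
    (du : Fin 3 → Fin 3 → ℝ) (dGi dg : Fin 3 → Fin 3 → Fin 3 → ℝ)
    (d2 : Fin 3 → Fin 3 → Fin 2 → ℝ) (Hi : Matrix (Fin 2) (Fin 2) ℝ) (c0 : ℝ)
    (hdGi : ∀ k p j, dGi k p j = -(∑ i, ∑ m, Gi p i * dg k i m * Gi m j))
    (h11 : ∀ i α, (∑ k, u k * d2 k i α) = -(∑ k, B α k * du i k))
    (h13 : ∀ α β, (∑ k, u k * (∑ i, ∑ j, (dGi k i j * B α i * B β j
        + Gi i j * d2 k i α * B β j + Gi i j * B α i * d2 k j β))) = c0 * Hi α β) :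
    ∀ α β, (∑ i, ∑ j, (-(∑ m, ∑ n, Gi i m * (∑ k, u k * dg k m n) * Gi n j)
        - (∑ m, Gi m j * du m i) - (∑ m, Gi i m * du m j)) * B α i * B β j)
      = c0 * Hi α β := by
  intro α β
  have h := h13 α β
  simp only [hdGi] at h
  have a0 := h11 0 α
  have a1 := h11 1 α
  have a2 := h11 2 α
  have b0 := h11 0 β
  have b1 := h11 1 β
  have b2 := h11 2 β
  simp only [Fin.sum_univ_three] at h a0 a1 a2 b0 b1 b2 ⊢
  linear_combination h
    - (Gi 0 0 * B β 0 + Gi 0 1 * B β 1 + Gi 0 2 * B β 2) * a0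
    - (Gi 1 0 * B β 0 + Gi 1 1 * B β 1 + Gi 1 2 * B β 2) * a1
    - (Gi 2 0 * B β 0 + Gi 2 1 * B β 1 + Gi 2 2 * B β 2) * a2
    - (Gi 0 0 * B α 0 + Gi 1 0 * B α 1 + Gi 2 0 * B α 2) * b0
    - (Gi 0 1 * B α 0 + Gi 1 1 * B α 1 + Gi 2 1 * B α 2) * b1
    - (Gi 0 2 * B α 0 + Gi 1 2 * B α 1 + Gi 2 2 * B α 2) * b2

lemma sum_split3 (A B C W : Fin 3 → Fin 3 → ℝ) :
    (∑ i, ∑ j, (-(A i j) - B i j - C i j) * W i j)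
      = -(∑ i, ∑ j, A i j * W i j) - (∑ i, ∑ j, B i j * W i j)
        - (∑ i, ∑ j, C i j * W i j) := by
  simp only [Fin.sum_univ_three]
  ring

lemma rearr1 (Gi : Matrix (Fin 3) (Fin 3) ℝ) (udg : Fin 3 → Fin 3 → ℝ) (v : Fin 3 → ℝ) :
    (∑ i, ∑ j, (∑ m, ∑ n, Gi i m * udg m n * Gi n j) * (v i * v j))
      = ∑ m, ∑ n, udg m n * (∑ i, Gi i m * v i) * (∑ j, Gi n j * v j) := by
  simp only [Fin.sum_univ_three]
  ring

lemma rearr2 (Gi : Matrix (Fin 3) (Fin 3) ℝ) (du : Fin 3 → Fin 3 → ℝ) (v : Fin 3 → ℝ) :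
    (∑ i, ∑ j, (∑ m, Gi m j * du m i) * (v i * v j))
      = ∑ m, ∑ i, du m i * v i * (∑ j, Gi m j * v j) := by
  simp only [Fin.sum_univ_three]
  ring

lemma rearr3 (Gi : Matrix (Fin 3) (Fin 3) ℝ) (du : Fin 3 → Fin 3 → ℝ) (v : Fin 3 → ℝ) :
    (∑ i, ∑ j, (∑ m, Gi i m * du m j) * (v i * v j))
      = ∑ m, ∑ j, du m j * v j * (∑ i, Gi i m * v i) := by
  simp only [Fin.sum_univ_three]
  ring

set_option maxHeartbeats 1000000 in
lemma contract_Tup (G Gi : Matrix (Fin 3) (Fin 3) ℝ) (udg du : Fin 3 → Fin 3 → ℝ)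
    (e : Fin 3 → ℝ)
    (hGs : ∀ i j, G i j = G j i) (hGis : ∀ i j, Gi i j = Gi j i)
    (hcol : ∀ m, (∑ i, Gi m i * (∑ k, G i k * e k)) = e m) :
    (∑ i, ∑ j, (-(∑ m, ∑ n, Gi i m * udg m n * Gi n j)
        - (∑ m, Gi m j * du m i) - (∑ m, Gi i m * du m j))
        * (∑ k, G i k * e k) * (∑ k, G j k * e k))
      = -(∑ m, ∑ n, (udg m n + (∑ k, G k n * du m k) + (∑ k, G m k * du n k))
          * e m * e n) := by
  have hcol' : ∀ m, (∑ i, Gi i m * (∑ k, G i k * e k)) = e m := fun m => by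
    rw [← hcol m]
    exact Finset.sum_congr rfl fun i _ => by rw [hGis i m]
  have hsplit := sum_split3 (fun i j => ∑ m, ∑ n, Gi i m * udg m n * Gi n j)
    (fun i j => ∑ m, Gi m j * du m i) (fun i j => ∑ m, Gi i m * du m j)
    (fun i j => (∑ k, G i k * e k) * (∑ k, G j k * e k))
  have e1 := rearr1 Gi udg (fun i => ∑ k, G i k * e k)
  have e2 := rearr2 Gi du (fun i => ∑ k, G i k * e k)
  have e3 := rearr3 Gi du (fun i => ∑ k, G i k * e k)
  simp only [hcol, hcol'] at e1 e2 e3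
  have lhs_eq : (∑ i, ∑ j, (-(∑ m, ∑ n, Gi i m * udg m n * Gi n j)
        - (∑ m, Gi m j * du m i) - (∑ m, Gi i m * du m j))
        * (∑ k, G i k * e k) * (∑ k, G j k * e k))
      = -(∑ m, ∑ n, udg m n * e m * e n)
        - (∑ m, ∑ i, du m i * (∑ k, G i k * e k) * e m)
        - (∑ m, ∑ j, du m j * (∑ k, G j k * e k) * e m) := by
    calc (∑ i, ∑ j, (-(∑ m, ∑ n, Gi i m * udg m n * Gi n j)
        - (∑ m, Gi m j * du m i) - (∑ m, Gi i m * du m j))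
        * (∑ k, G i k * e k) * (∑ k, G j k * e k))
        = (∑ i, ∑ j, (-(∑ m, ∑ n, Gi i m * udg m n * Gi n j)
            - (∑ m, Gi m j * du m i) - (∑ m, Gi i m * du m j))
            * ((∑ k, G i k * e k) * (∑ k, G j k * e k))) := by
          simp only [mul_assoc]
      _ = -(∑ m, ∑ n, udg m n * e m * e n)
        - (∑ m, ∑ i, du m i * (∑ k, G i k * e k) * e m)
        - (∑ m, ∑ j, du m j * (∑ k, G j k * e k) * e m) := by
          rw [hsplit, e1, e2, e3]
  rw [lhs_eq]
  simp only [Fin.sum_univ_three]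
  simp only [hGs 1 0, hGs 2 0, hGs 2 1]
  ring

lemma trace2 (Hm Hi : Matrix (Fin 2) (Fin 2) ℝ) (hHmHi : Hm * Hi = 1)
    (hHs : Hm 0 1 = Hm 1 0) :
    (∑ α, ∑ β, Hm α β * Hi α β) = 2 := by
  have h00 := congrFun (congrFun hHmHi 0) 0
  have h11 := congrFun (congrFun hHmHi 1) 1
  simp only [Matrix.mul_apply, Fin.sum_univ_two, Matrix.one_apply] at h00 h11
  norm_num at h00 h11
  simp only [hHs] at h00 h11
  simp only [Fin.sum_univ_two, hHs]
  linear_combination h00 + h11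

lemma wv (G Gi : Matrix (Fin 3) (Fin 3) ℝ) (u e1 e2 : Fin 3 → ℝ)
    (hGs : ∀ i j, G i j = G j i) (hGGi : G * Gi = 1)
    (hframe : ∀ i j, u i * u j + e1 i * e1 j + e2 i * e2 j = Gi i j) :
    ∀ i j, G i j - (∑ k, G i k * u k) * (∑ k, G j k * u k)
      = (∑ k, G i k * e1 k) * (∑ k, G j k * e1 k)
        + (∑ k, G i k * e2 k) * (∑ k, G j k * e2 k) := by
  intro i j
  have h1 : (∑ a, G i a * (∑ b, Gi a b * G j b)) = G j i :=
    collapse hGGi (fun b => G j b) i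
  simp only [← hframe] at h1
  simp only [Fin.sum_univ_three] at h1 ⊢
  simp only [hGs 1 0, hGs 2 0, hGs 2 1, hGs j i] at h1 ⊢
  linear_combination -h1

lemma step5b (Tup : Fin 3 → Fin 3 → ℝ) (B : Fin 2 → Fin 3 → ℝ)
    (Hm Hi : Matrix (Fin 2) (Fin 2) ℝ) (v1 v2 : Fin 3 → ℝ) (c0 l2 Q1 Q2 : ℝ)
    (h5a : ∀ α β, (∑ i, ∑ j, Tup i j * B α i * B β j) = c0 * Hi α β)
    (hP : ∀ i j, (∑ α, ∑ β, Hm α β * B α i * B β j) = l2 * (v1 i * v1 j + v2 i * v2 j))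
    (hC1 : (∑ i, ∑ j, Tup i j * v1 i * v1 j) = -Q1)
    (hC2 : (∑ i, ∑ j, Tup i j * v2 i * v2 j) = -Q2)
    (htr : (∑ α, ∑ β, Hm α β * Hi α β) = 2) :
    l2 * (Q1 + Q2) = -(2 * c0) := by
  have e00 := h5a 0 0
  have e01 := h5a 0 1
  have e10 := h5a 1 0
  have e11 := h5a 1 1
  simp only [Fin.sum_univ_three, Fin.sum_univ_two] at e00 e01 e10 e11 hC1 hC2 htr
  have hPc : ∀ i j : Fin 3, (∑ α, ∑ β, Hm α β * B α i * B β j)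
      = l2 * (v1 i * v1 j + v2 i * v2 j) := hP
  have p00 := hPc 0 0; have p01 := hPc 0 1; have p02 := hPc 0 2
  have p10 := hPc 1 0; have p11 := hPc 1 1; have p12 := hPc 1 2
  have p20 := hPc 2 0; have p21 := hPc 2 1; have p22 := hPc 2 2
  simp only [Fin.sum_univ_two] at p00 p01 p02 p10 p11 p12 p20 p21 p22
  linear_combination (-(Hm 0 0)) * e00 - Hm 0 1 * e01 - Hm 1 0 * e10 - Hm 1 1 * e11
    + Tup 0 0 * p00 + Tup 0 1 * p01 + Tup 0 2 * p02
    + Tup 1 0 * p10 + Tup 1 1 * p11 + Tup 1 2 * p12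
    + Tup 2 0 * p20 + Tup 2 1 * p21 + Tup 2 2 * p22
    + l2 * hC1 + l2 * hC2 - c0 * htr

open scoped Matrix in
lemma frameA (G : Matrix (Fin 3) (Fin 3) ℝ) (u e1 e2 : Fin 3 → ℝ)
    (hGs : ∀ i j, G i j = G j i)
    (huu : (∑ i, ∑ j, G i j * u i * u j) = 1)
    (h11 : (∑ i, ∑ j, G i j * e1 i * e1 j) = 1)
    (h22 : (∑ i, ∑ j, G i j * e2 i * e2 j) = 1)
    (h12 : (∑ i, ∑ j, G i j * e1 i * e2 j) = 0)
    (h1u : (∑ i, ∑ j, G i j * e1 i * u j) = 0)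
    (h2u : (∑ i, ∑ j, G i j * e2 i * u j) = 0) :
    (Matrix.of (fun i a => ![u i, e1 i, e2 i] a))ᵀ * G
      * (Matrix.of (fun i a => ![u i, e1 i, e2 i] a)) = 1 := by
  simp only [Fin.sum_univ_three] at huu h11 h22 h12 h1u h2u
  simp only [hGs 1 0, hGs 2 0, hGs 2 1] at huu h11 h22 h12 h1u h2u
  ext a b
  fin_cases a <;> fin_cases b <;>
    · simp only [Matrix.mul_apply, Fin.sum_univ_three, Matrix.transpose_apply,
        Matrix.of_apply, Matrix.cons_val_zero, Matrix.cons_val_one, Matrix.head_cons,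
        Matrix.cons_val_two, Matrix.tail_cons, Matrix.one_apply]
      norm_num [Fin.ext_iff]
      simp only [hGs 1 0, hGs 2 0, hGs 2 1]
      first
        | linear_combination huu | linear_combination h11 | linear_combination h22
        | linear_combination h12 | linear_combination h1u | linear_combination h2u

/-- For a submersive semi-conformal `φ : (M³,g) → (N²,h)` with dilation `λ`,
the mean curvature `(1/2) g(U, ∇_{e₁}e₁ + ∇_{e₂}e₂)` of the horizontal distribution equals
`U(ln λ)`, for any orthonormal horizontal frame `{e₁, e₂}`. -/
theorem horizontal_mean_curvature_eq_U_log_dilation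
    (g : (Fin 3 → ℝ) → Matrix (Fin 3) (Fin 3) ℝ)
    (h : (Fin 2 → ℝ) → Matrix (Fin 2) (Fin 2) ℝ)
    (φ : (Fin 3 → ℝ) → Fin 2 → ℝ) (lam : (Fin 3 → ℝ) → ℝ)
    (U e₁ e₂ : (Fin 3 → ℝ) → Fin 3 → ℝ)
    (hg : IsMetric g) (hh : IsMetric h)
    (hφ : ∀ α, ContDiff ℝ (⊤ : ℕ∞) fun x => φ x α)
    (hlam : ContDiff ℝ (⊤ : ℕ∞) lam) (hlampos : ∀ x, 0 < lam x)
    (hsc : SemiConformal g h φ lam)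
    (hU : SmoothVF U) (hUvert : Vertical φ U) (hUunit : UnitField g U)
    (he₁ : SmoothVF e₁) (he₂ : SmoothVF e₂)
    (hortho : ∀ x, (∑ i, ∑ j, g x i j * e₁ x i * e₁ x j) = 1
      ∧ (∑ i, ∑ j, g x i j * e₂ x i * e₂ x j) = 1
      ∧ (∑ i, ∑ j, g x i j * e₁ x i * e₂ x j) = 0)
    (hhor : ∀ x, (∑ i, ∑ j, g x i j * e₁ x i * U x j) = 0
      ∧ (∑ i, ∑ j, g x i j * e₂ x i * U x j) = 0) :
    ∀ x,
      (1 / 2) * (∑ j, ∑ k, g x j k * U x j * (covD g e₁ e₁ x k + covD g e₂ e₂ x k))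
        = ∑ k, U x k * pd (fun y => Real.log (lam y)) k x := by
  intro x
  have diffof : ∀ {n : ℕ} {f : (Fin n → ℝ) → ℝ}, ContDiff ℝ (⊤ : ℕ∞) f →
      ∀ y, DifferentiableAt ℝ f y :=
    fun hf y => (hf.differentiable (by simp)).differentiableAt
  -- basic facts about the metric g
  have hGs : ∀ (y : Fin 3 → ℝ) (i j : Fin 3), g y i j = g y j i := by
    intro y i j
    have h1 := congrFun (congrFun ((hg.2 y).1) j) i
    rw [Matrix.transpose_apply] at h1
    exact h1
  have hdet : ∀ y, IsUnit (g y).det := fun y =>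
    isUnit_iff_ne_zero.2 (ne_of_gt (hg.2 y).2.det_pos)
  have hGGi : ∀ y, g y * ginv g y = 1 := fun y => Matrix.mul_nonsing_inv _ (hdet y)
  have hGiG : ∀ y, ginv g y * g y = 1 := fun y => Matrix.nonsing_inv_mul _ (hdet y)
  have hgicd : ∀ i j, ContDiff ℝ (⊤ : ℕ∞) fun y => ginv g y i j := fun i j =>
    contDiff_inv3 g hg.1 (fun y => ne_of_gt (hg.2 y).2.det_pos) i j
  have hGT : (g x)ᵀ = g x := (hg.2 x).1
  have hGiT : (ginv g x)ᵀ = ginv g x := by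
    show ((g x)⁻¹)ᵀ = (g x)⁻¹
    rw [Matrix.transpose_nonsing_inv, hGT]
  have hGis : ∀ i j, ginv g x i j = ginv g x j i := by
    intro i j
    have h1 := congrFun (congrFun hGiT j) i
    rw [Matrix.transpose_apply] at h1
    exact h1
  -- facts about h
  have hdeth : ∀ w, (h w).det ≠ 0 := fun w => ne_of_gt (hh.2 w).2.det_pos
  have hHmHi : h (φ x) * ginv h (φ x) = 1 :=
    Matrix.mul_nonsing_inv _ (isUnit_iff_ne_zero.2 (hdeth (φ x)))
  have hHs : h (φ x) 0 1 = h (φ x) 1 0 := by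
    have h1 := congrFun (congrFun ((hh.2 (φ x)).1) 1) 0
    rw [Matrix.transpose_apply] at h1
    exact h1
  -- differentiability atoms
  have hdiff_g : ∀ (i j : Fin 3) (y : Fin 3 → ℝ), DifferentiableAt ℝ (fun z => g z i j) y :=
    fun i j y => diffof (hg.1 i j) y
  have hφd2 : ∀ (α : Fin 2) (i : Fin 3), ContDiff ℝ (⊤ : ℕ∞) fun y => pd (fun z => φ z α) i y :=
    fun α i => contDiff_pd (hφ α) i
  -- symmetry of the derivatives of g
  have hdgs : ∀ k i j : Fin 3, pd (fun y => g y i j) k x = pd (fun y => g y j i) k x := by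
    intro k i j
    have h1 : (fun y => g y i j) = fun y => g y j i := funext fun y => hGs y i j
    rw [h1]
  -- lowered Christoffel symbols
  have hGlow : ∀ j i m : Fin 3, (∑ k, g x j k * christoffel g k i m x)
      = (1/2) * (pd (fun y => g y j m) i x + pd (fun y => g y j i) m x
          - pd (fun y => g y i m) j x) := by
    intro j i m
    have hc := collapse (hGGi x) (fun l => pd (fun y => g y l m) i x
      + pd (fun y => g y l i) m x - pd (fun y => g y i m) l x) j
    calc (∑ k, g x j k * christoffel g k i m x)
        = (1/2) * ∑ k, g x j k * (∑ l, ginv g x k l * (pd (fun y => g y l m) i x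
            + pd (fun y => g y l i) m x - pd (fun y => g y i m) l x)) := by
          simp only [christoffel]
          simp only [Fin.sum_univ_three]
          ring
      _ = (1/2) * (pd (fun y => g y j m) i x + pd (fun y => g y j i) m x
            - pd (fun y => g y i m) j x) := by rw [hc]
  -- derivative of the horizontality conditions
  have hdh1 : ∀ k, (∑ i, ∑ j, (pd (fun y => g y i j) k x * e₁ x i * U x j
      + g x i j * pd (fun y => e₁ y i) k x * U x j
      + g x i j * e₁ x i * pd (fun y => U y j) k x)) = 0 := by
    intro k
    have hz : (fun y => ∑ i, ∑ j, g y i j * e₁ y i * U y j) = fun _ => (0:ℝ) :=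
      funext fun y => (hhor y).1
    have hexp := pd_contract3 (fun y => g y) (fun y i => e₁ y i) (fun y j => U y j) k
      (fun i j => hdiff_g i j x) (fun i => diffof (he₁ i) x) (fun i => diffof (hU i) x)
    rw [hz, pd_const] at hexp
    exact hexp.symm
  have hdh2 : ∀ k, (∑ i, ∑ j, (pd (fun y => g y i j) k x * e₂ x i * U x j
      + g x i j * pd (fun y => e₂ y i) k x * U x j
      + g x i j * e₂ x i * pd (fun y => U y j) k x)) = 0 := by
    intro k
    have hz : (fun y => ∑ i, ∑ j, g y i j * e₂ y i * U y j) = fun _ => (0:ℝ) :=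
      funext fun y => (hhor y).2
    have hexp := pd_contract3 (fun y => g y) (fun y i => e₂ y i) (fun y j => U y j) k
      (fun i j => hdiff_g i j x) (fun i => diffof (he₂ i) x) (fun i => diffof (hU i) x)
    rw [hz, pd_const] at hexp
    exact hexp.symm
  -- step 1 for both horizontal fields
  have key1 := step1 (g x) (fun k i j => pd (fun y => g y i j) k x)
    (fun k i m => christoffel g k i m x) (U x) (e₁ x)
    (fun a b => pd (fun y => U y b) a x) (fun a b => pd (fun y => e₁ y b) a x)
    (hGs x) hdgs hGlow hdh1
  have key2 := step1 (g x) (fun k i j => pd (fun y => g y i j) k x)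
    (fun k i m => christoffel g k i m x) (U x) (e₂ x)
    (fun a b => pd (fun y => U y b) a x) (fun a b => pd (fun y => e₂ y b) a x)
    (hGs x) hdgs hGlow hdh2
  -- derivative of the inverse metric
  have h9 : ∀ k i j : Fin 3, (∑ m, (pd (fun y => g y i m) k x * ginv g x m j
      + g x i m * pd (fun y => ginv g y m j) k x)) = 0 := by
    intro k i j
    have hz : (fun y => ∑ m, g y i m * ginv g y m j)
        = fun _ => (1 : Matrix (Fin 3) (Fin 3) ℝ) i j := by
      funext y
      have h1 := congrFun (congrFun (hGGi y) i) j
      simpa [Matrix.mul_apply] using h1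
    have hexp := pd_dot (fun y m => g y i m) (fun y m => ginv g y m j) k
      (fun m => hdiff_g i m x) (fun m => diffof (hgicd m j) x)
    rw [hz, pd_const] at hexp
    exact hexp.symm
  have hdGi := dGi_solve (g x) (ginv g x) (fun k i j => pd (fun y => g y i j) k x)
    (fun k i j => pd (fun y => ginv g y i j) k x) (hGiG x) h9
  -- derivative of verticality plus symmetry of second derivatives
  have h11 : ∀ (i : Fin 3) (α : Fin 2),
      (∑ k, U x k * pd (fun y => pd (fun z => φ z α) i y) k x)
        = -(∑ k, pd (fun z => φ z α) k x * pd (fun y => U y k) i x) := by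
    intro i α
    have hz : (fun y => ∑ k, pd (fun z => φ z α) k y * U y k) = fun _ => (0:ℝ) :=
      funext fun y => hUvert y α
    have hexp := pd_dot (fun y k => pd (fun z => φ z α) k y) (fun y k => U y k) i
      (fun k => diffof (hφd2 α k) x) (fun k => diffof (hU k) x)
    rw [hz, pd_const] at hexp
    have hs : ∀ k : Fin 3, pd (fun y => pd (fun z => φ z α) k y) i x
        = pd (fun y => pd (fun z => φ z α) i y) k x := fun k => pd_pd_symm (hφ α) i k x
    simp only [Fin.sum_univ_three] at hexp ⊢
    rw [hs 0, hs 1, hs 2] at hexp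
    linear_combination -hexp
  -- differentiated semiconformality contracted with U
  have heq13 : ∀ α β : Fin 2,
      (∑ k, U x k * (∑ i, ∑ j,
          (pd (fun y => ginv g y i j) k x * pd (fun z => φ z α) i x * pd (fun z => φ z β) j x
          + ginv g x i j * pd (fun y => pd (fun z => φ z α) i y) k x * pd (fun z => φ z β) j x
          + ginv g x i j * pd (fun z => φ z α) i x * pd (fun y => pd (fun z => φ z β) j y) k x)))
        = (∑ k, U x k * (2 * lam x * pd lam k x)) * ginv h (φ x) α β := by
    intro α β
    have hz : (fun y => ∑ i, ∑ j, ginv g y i j * pd (fun z => φ z α) i y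
          * pd (fun z => φ z β) j y)
        = fun y => lam y ^ 2 * ginv h (φ y) α β := funext fun y => hsc y α β
    have hL : ∀ k, pd (fun y => ∑ i, ∑ j, ginv g y i j * pd (fun z => φ z α) i y
          * pd (fun z => φ z β) j y) k x
        = ∑ i, ∑ j,
          (pd (fun y => ginv g y i j) k x * pd (fun z => φ z α) i x * pd (fun z => φ z β) j x
          + ginv g x i j * pd (fun y => pd (fun z => φ z α) i y) k x * pd (fun z => φ z β) j x
          + ginv g x i j * pd (fun z => φ z α) i x * pd (fun y => pd (fun z => φ z β) j y) k x) :=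
      fun k => pd_contract3 (fun y => ginv g y) (fun y i => pd (fun z => φ z α) i y)
        (fun y j => pd (fun z => φ z β) j y) k (fun i j => diffof (hgicd i j) x)
        (fun i => diffof (hφd2 α i) x) (fun j => diffof (hφd2 β j) x)
    have hdF : DifferentiableAt ℝ (fun y => ginv h (φ y) α β) x := by
      have h1 : DifferentiableAt ℝ (fun w => ginv h w α β) (φ x) :=
        diffof (contDiff_inv2 h hh.1 hdeth α β) (φ x)
      have h2 : DifferentiableAt ℝ φ x := differentiableAt_pi.2 fun γ => diffof (hφ γ) x
      exact DifferentiableAt.comp x h1 h2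
    have hR : ∀ k : Fin 3, pd (fun y => lam y ^ 2 * ginv h (φ y) α β) k x
        = (2 * lam x * pd lam k x) * ginv h (φ x) α β
          + lam x ^ 2 * pd (fun y => ginv h (φ y) α β) k x := by
      intro k
      have hlam2 : (fun y => lam y ^ 2 * ginv h (φ y) α β)
          = fun y => (lam y * lam y) * ginv h (φ y) α β := by
        funext y
        ring
      rw [hlam2]
      have hdlam := diffof hlam x
      rw [pd_mul k (hdlam.fun_mul hdlam) hdF, pd_mul k hdlam hdlam]
      ring
    have hchain : (∑ k, U x k * pd (fun y => ginv h (φ y) α β) k x) = 0 :=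
      chain_vanish φ (fun w => ginv h w α β) (U x) x hφ
        (diffof (contDiff_inv2 h hh.1 hdeth α β) (φ x)) (fun γ => hUvert x γ)
    calc (∑ k, U x k * (∑ i, ∑ j,
          (pd (fun y => ginv g y i j) k x * pd (fun z => φ z α) i x * pd (fun z => φ z β) j x
          + ginv g x i j * pd (fun y => pd (fun z => φ z α) i y) k x * pd (fun z => φ z β) j x
          + ginv g x i j * pd (fun z => φ z α) i x * pd (fun y => pd (fun z => φ z β) j y) k x)))
        = ∑ k, U x k * pd (fun y => ∑ i, ∑ j, ginv g y i j * pd (fun z => φ z α) i y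
            * pd (fun z => φ z β) j y) k x :=
          Finset.sum_congr rfl fun k _ => by rw [hL k]
      _ = ∑ k, U x k * pd (fun y => lam y ^ 2 * ginv h (φ y) α β) k x :=
          Finset.sum_congr rfl fun k _ => by rw [hz]
      _ = ∑ k, U x k * ((2 * lam x * pd lam k x) * ginv h (φ x) α β
            + lam x ^ 2 * pd (fun y => ginv h (φ y) α β) k x) :=
          Finset.sum_congr rfl fun k _ => by rw [hR k]
      _ = (∑ k, U x k * (2 * lam x * pd lam k x)) * ginv h (φ x) α β
            + lam x ^ 2 * (∑ k, U x k * pd (fun y => ginv h (φ y) α β) k x) := by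
          simp only [Fin.sum_univ_three]
          ring
      _ = (∑ k, U x k * (2 * lam x * pd lam k x)) * ginv h (φ x) α β := by
          rw [hchain]
          ring
  -- step 5a
  have h5a := step5a (ginv g x) (fun α i => pd (fun z => φ z α) i x) (U x)
    (fun a b => pd (fun y => U y b) a x)
    (fun k i j => pd (fun y => ginv g y i j) k x)
    (fun k i j => pd (fun y => g y i j) k x)
    (fun k i α => pd (fun y => pd (fun z => φ z α) i y) k x)
    (ginv h (φ x)) (∑ k, U x k * (2 * lam x * pd lam k x)) hdGi h11 heq13
  -- the frame matrix and the projector identity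
  have hAmat := frameA (g x) (U x) (e₁ x) (e₂ x) (hGs x) (hUunit x) (hortho x).1
    (hortho x).2.1 (hortho x).2.2 (hhor x).1 (hhor x).2
  have hframe := frame (g x) (ginv g x) (U x) (e₁ x) (e₂ x) (hGs x) (hGGi x)
    (hUunit x) (hortho x).1 (hortho x).2.1 (hortho x).2.2 (hhor x).1 (hhor x).2
  have hl2ne : lam x ^ 2 ≠ 0 := pow_ne_zero 2 (ne_of_gt (hlampos x))
  have hPfull := claimP (g x) (ginv g x) (h (φ x)) (ginv h (φ x))
    (Matrix.of fun α i => pd (fun z => φ z α) i x) (U x) (lam x ^ 2)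
    (Matrix.of fun i a => ![U x i, e₁ x i, e₂ x i] a)
    hAmat (fun i => rfl) hl2ne hGT (hGGi x) hHmHi (fun α β => hsc x α β)
    (fun α => hUvert x α)
  have hwv := wv (g x) (ginv g x) (U x) (e₁ x) (e₂ x) (hGs x) (hGGi x) hframe
  have hP' : ∀ i j, (∑ α, ∑ β, h (φ x) α β * pd (fun z => φ z α) i x
        * pd (fun z => φ z β) j x)
      = lam x ^ 2 * ((∑ k, g x i k * e₁ x k) * (∑ k, g x j k * e₁ x k)
          + (∑ k, g x i k * e₂ x k) * (∑ k, g x j k * e₂ x k)) := by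
    intro i j
    have h1 := hPfull i j
    rw [hwv i j] at h1
    exact h1
  -- contraction of Tup with the flat horizontal frame
  have hcol1 := collapse (hGiG x) (e₁ x)
  have hcol2 := collapse (hGiG x) (e₂ x)
  have hC1 := contract_Tup (g x) (ginv g x)
    (fun m n => ∑ k, U x k * pd (fun y => g y m n) k x)
    (fun a b => pd (fun y => U y b) a x) (e₁ x) (hGs x) hGis hcol1
  have hC2 := contract_Tup (g x) (ginv g x)
    (fun m n => ∑ k, U x k * pd (fun y => g y m n) k x)
    (fun a b => pd (fun y => U y b) a x) (e₂ x) (hGs x) hGis hcol2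
  have htr := trace2 (h (φ x)) (ginv h (φ x)) hHmHi hHs
  -- the key dilation identity
  have hQ := step5b
    (fun i j => (-(∑ m, ∑ n, ginv g x i m * (∑ k, U x k * pd (fun y => g y m n) k x)
        * ginv g x n j)
      - (∑ m, ginv g x m j * pd (fun y => U y i) m x)
      - (∑ m, ginv g x i m * pd (fun y => U y j) m x)))
    (fun α i => pd (fun z => φ z α) i x) (h (φ x)) (ginv h (φ x))
    (fun i => ∑ k, g x i k * e₁ x k) (fun i => ∑ k, g x i k * e₂ x k)
    (∑ k, U x k * (2 * lam x * pd lam k x)) (lam x ^ 2)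
    (∑ m, ∑ n, ((∑ k, U x k * pd (fun y => g y m n) k x)
      + (∑ k, g x k n * pd (fun y => U y k) m x)
      + (∑ k, g x m k * pd (fun y => U y k) n x)) * e₁ x m * e₁ x n)
    (∑ m, ∑ n, ((∑ k, U x k * pd (fun y => g y m n) k x)
      + (∑ k, g x k n * pd (fun y => U y k) m x)
      + (∑ k, g x m k * pd (fun y => U y k) n x)) * e₂ x m * e₂ x n)
    h5a hP' hC1 hC2 htr
  -- final assembly
  have hlog : ∀ k : Fin 3, pd (fun y => Real.log (lam y)) k x = (lam x)⁻¹ * pd lam k x :=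
    fun k => pd_log lam hlam hlampos k x
  have hinv : (lam x)⁻¹ * lam x = 1 := inv_mul_cancel₀ (ne_of_gt (hlampos x))
  refine mul_left_cancel₀ hl2ne ?_
  simp only [covD, hlog]
  simp only [Fin.sum_univ_three] at key1 key2 hQ ⊢
  linear_combination (lam x ^ 2 / 2) * key1 + (lam x ^ 2 / 2) * key2 - (1/4) * hQ
    + (-(lam x) * (U x 0 * pd lam 0 x + U x 1 * pd lam 1 x + U x 2 * pd lam 2 x)) * hinv
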